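/- Let (T_s)_{s∈S} be a bounded representation of a commutative monoid (S,+) on a Banach space E such that the operator T_{s₀} is quasi-compact for some s₀ ∈ S. Then the semigroup at infinity 𝒯_∞ associated with (T_s)_{s∈S} is non-empty and compact in the operator norm, and the projection at infinity P_∞ has finite rank. -/

import Mathlib

open Filter Topology

/-- The pre-order on a commutative monoid `S`: `s ≤ t` iff `t = s + r` for some `r ∈ S`. -/
def sgLE {S : Type*} [AddCommMonoid S] (s t : S) : Prop := ∃ r : S, t = s + r

/-- The semigroup at infinity with respect to the operator norm:
`𝒯_∞ = ⋂_{r ∈ S} closure {T_s : s ≥ r}`. -/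
def sgAtInfty {E : Type*} [NormedAddCommGroup E] [NormedSpace ℝ E]
    {S : Type*} [AddCommMonoid S] (T : S → E →L[ℝ] E) : Set (E →L[ℝ] E) :=
  ⋂ r : S, closure (T '' {s | sgLE r s})

/-- `P` is the neutral element of the semigroup at infinity (the projection at infinity). -/
def IsNeutralAtInfty {E : Type*} [NormedAddCommGroup E] [NormedSpace ℝ E]
    {S : Type*} [AddCommMonoid S] (T : S → E →L[ℝ] E) (P : E →L[ℝ] E) : Prop :=
  P ∈ sgAtInfty T ∧ ∀ A ∈ sgAtInfty T, P * A = A ∧ A * P = A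

/-- An operator is quasi-compact if some positive power is at distance `< 1` (in the operator
norm) from a compact operator. -/
def QuasiCompact {E : Type*} [NormedAddCommGroup E] [NormedSpace ℝ E] (A : E →L[ℝ] E) : Prop :=
  ∃ (K : E →L[ℝ] E) (n : ℕ), IsCompactOperator ⇑K ∧ 0 < n ∧ ‖A ^ n - K‖ < 1

section Statement8Aux

open Metric

variable {E : Type*} [NormedAddCommGroup E] [NormedSpace ℝ E]
  {S : Type*} [AddCommMonoid S]

theorem Statement8.sg_pow (T : S → E →L[ℝ] E) (hT0 : T 0 = 1)
    (hTmul : ∀ s t : S, T (s + t) = T s * T t)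
    (s : S) : ∀ m : ℕ, T (m • s) = T s ^ m := by
  intro m
  induction m with
  | zero => simpa using hT0
  | succ k ih => rw [succ_nsmul, hTmul, ih, pow_succ]

theorem Statement8.cm_compact (A K : E →L[ℝ] E) (hK : IsCompactOperator ⇑K) :
    ∀ m : ℕ, IsCompactOperator ⇑(A ^ m - (A - K) ^ m) := by
  intro m
  induction m with
  | zero =>
      refine ⟨{0}, isCompact_singleton, ?_⟩
      have h : (⇑(0 : E →L[ℝ] E)) ⁻¹' ({0} : Set E) = Set.univ := by ext x; simp
      simp only [pow_zero, sub_self]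
      rw [h]
      exact Filter.univ_mem
  | succ k ih =>
      have hid : A ^ (k+1) - (A - K) ^ (k+1)
          = (A ^ k - (A - K) ^ k) * A + (A - K) ^ k * K := by
        rw [pow_succ, pow_succ]; noncomm_ring
      rw [hid]
      have h1 : IsCompactOperator ⇑((A ^ k - (A - K) ^ k) * A) := by
        have := ih.comp_clm A
        simpa [Function.comp_def] using this
      have h2 : IsCompactOperator ⇑((A - K) ^ k * K) := by
        have := hK.clm_comp ((A - K) ^ k)
        simpa [Function.comp_def] using this
      simpa using h1.add h2

theorem Statement8.opnorm_le_unit (f : E →L[ℝ] E) {c : ℝ} (hc : 0 ≤ c)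
    (h : ∀ x : E, ‖x‖ ≤ 1 → ‖f x‖ ≤ c) : ‖f‖ ≤ c := by
  refine f.opNorm_le_bound hc fun x => ?_
  rcases eq_or_ne x 0 with rfl | hx
  · simp
  · have hnx : 0 < ‖x‖ := norm_pos_iff.mpr hx
    have h1 : ‖(‖x‖⁻¹ • x)‖ ≤ 1 := by
      rw [norm_smul, norm_inv, norm_norm, inv_mul_cancel₀ hnx.ne']
    have h2 := h _ h1
    rw [map_smul, norm_smul, norm_inv, norm_norm] at h2
    calc ‖f x‖ = ‖x‖ * (‖x‖⁻¹ * ‖f x‖) := by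
          rw [← mul_assoc, mul_inv_cancel₀ hnx.ne', one_mul]
    _ ≤ ‖x‖ * c := mul_le_mul_of_nonneg_left h2 hnx.le
    _ = c * ‖x‖ := mul_comm _ _

theorem Statement8.norm_pow_le (R : E →L[ℝ] E) : ∀ k : ℕ, ‖R ^ k‖ ≤ ‖R‖ ^ k := by
  intro k
  induction k with
  | zero =>
      simp only [pow_zero]
      exact ContinuousLinearMap.norm_id_le
  | succ n ih =>
      rw [pow_succ, pow_succ]
      calc ‖R ^ n * R‖ ≤ ‖R ^ n‖ * ‖R‖ := norm_mul_le _ _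
      _ ≤ ‖R‖ ^ n * ‖R‖ := mul_le_mul_of_nonneg_right ih (norm_nonneg _)

theorem Statement8.cover_lemma (T : S → E →L[ℝ] E)
    (hT0 : T 0 = 1) (hTmul : ∀ s t : S, T (s + t) = T s * T t)
    {M : ℝ} (hM1 : 1 ≤ M) (hM : ∀ s, ‖T s‖ ≤ M)
    {s₁ : S} {K : E →L[ℝ] E} (hK : IsCompactOperator ⇑K) (hq : ‖T s₁ - K‖ < 1)
    {ε : ℝ} (hε : 0 < ε) :
    ∃ r : S, ∃ 𝒩 : Set (E →L[ℝ] E), 𝒩.Finite ∧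
      T '' {s | sgLE r s} ⊆ ⋃ N ∈ 𝒩, Metric.ball N ε := by
  classical
  have hM0 : (0:ℝ) < M := lt_of_lt_of_le one_pos hM1
  set A := T s₁ with hA
  set R := A - K with hR
  set q := ‖R‖ with hqdef
  have hq0 : 0 ≤ q := norm_nonneg _
  have hq1 : q < 1 := hq
  have htend : Tendsto (fun k : ℕ => q ^ k) atTop (𝓝 0) :=
    tendsto_pow_atTop_nhds_zero_of_lt_one hq0 hq1
  have hc0 : (0:ℝ) < ε / 16 / (M * (M + 2)) := by positivity
  obtain ⟨m, hmlt⟩ := (htend.eventually_lt_const hc0).exists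
  have hqm : q ^ m * (M * (M + 2)) < ε / 16 := by
    rw [← lt_div_iff₀ (by positivity : (0:ℝ) < M * (M + 2))]
    exact hmlt
  have hqmle1 : q ^ m ≤ 1 := pow_le_one₀ hq0 hq1.le
  set Cm := A ^ m - R ^ m with hCm
  have hRm : ‖R ^ m‖ ≤ q ^ m := Statement8.norm_pow_le R m
  have hTpow : T (m • s₁) = A ^ m := Statement8.sg_pow T hT0 hTmul s₁ m
  have hAm : ‖A ^ m‖ ≤ M := hTpow ▸ hM (m • s₁)
  have hCmnorm : ‖Cm‖ ≤ M + 1 := by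
    calc ‖A ^ m - R ^ m‖ ≤ ‖A ^ m‖ + ‖R ^ m‖ := norm_sub_le _ _
    _ ≤ M + 1 := add_le_add hAm (hRm.trans hqmle1)
  have hCmcpt : IsCompactOperator ⇑Cm := Statement8.cm_compact A K hK m
  have hCmcpt' : IsCompactOperator ⇑((Cm : E →ₗ[ℝ] E)) := by simpa using hCmcpt
  set η := min 1 (ε / (16 * M)) with hη
  have hη0 : 0 < η := lt_min one_pos (by positivity)
  have hη1 : η ≤ 1 := min_le_left _ _
  have hη2 : η ≤ ε / (16 * M) := min_le_right _ _
  set Γ' : Set E := Cm '' Metric.closedBall 0 1 with hΓ'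
  have hΓ'tb : TotallyBounded Γ' := by
    have h := (hCmcpt'.isCompact_closure_image_closedBall (𝕜₁ := ℝ) 1).totallyBounded
    exact TotallyBounded.subset subset_closure h
  obtain ⟨t, htf, htcov⟩ := totallyBounded_iff.mp hΓ'tb η hη0
  set t' : Set E := {y ∈ t | (Metric.ball y η ∩ Γ').Nonempty} with ht'
  have ht'f : t'.Finite := htf.subset (Set.sep_subset _ _)
  have ht'cov : Γ' ⊆ ⋃ y ∈ t', Metric.ball y η := by
    intro x hx
    rcases Set.mem_iUnion₂.mp (htcov hx) with ⟨y, hyt, hxy⟩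
    exact Set.mem_iUnion₂.mpr ⟨y, ⟨hyt, ⟨x, hxy, hx⟩⟩, hxy⟩
  have hΓ'norm : ∀ x ∈ Γ', ‖x‖ ≤ M + 1 := by
    rintro x ⟨z, hz, rfl⟩
    have hz1 : ‖z‖ ≤ 1 := by simpa [Metric.mem_closedBall, dist_eq_norm] using hz
    calc ‖Cm z‖ ≤ ‖Cm‖ * ‖z‖ := Cm.le_opNorm z
    _ ≤ (M + 1) * 1 := mul_le_mul hCmnorm hz1 (norm_nonneg _) (by linarith)
    _ = M + 1 := mul_one _
  have ht'norm : ∀ y ∈ t', ‖y‖ ≤ M + 2 := by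
    rintro y ⟨hyt, x, hxb, hxΓ⟩
    have h1 : dist x y < η := Metric.mem_ball.mp hxb
    have h2 := norm_sub_norm_le y x
    have h3 : ‖y - x‖ = dist x y := by rw [dist_comm, dist_eq_norm]
    have h4 := hΓ'norm x hxΓ
    rw [h3] at h2
    linarith
  haveI : Fintype ↥t' := ht'f.fintype
  set Φ : S → (↥t' → E) := fun u j => T (m • s₁ + u) (j : E) with hΦ
  have hTuj : ∀ (u : S) (j : ↥t'), ‖T u (j : E)‖ ≤ M * (M + 2) := by
    intro u j
    calc ‖T u (j:E)‖ ≤ ‖T u‖ * ‖(j:E)‖ := (T u).le_opNorm _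
    _ ≤ M * (M + 2) := mul_le_mul (hM u) (ht'norm _ j.2) (norm_nonneg _) hM0.le
  set Γ₂ : Set E := closure (Cm '' Metric.closedBall 0 (M * (M + 2))) with hΓ₂
  have hΓ₂cpt : IsCompact Γ₂ :=
    hCmcpt'.isCompact_closure_image_closedBall (𝕜₁ := ℝ) (M * (M + 2))
  set Y : Set (↥t' → E) := Set.univ.pi (fun _ => Γ₂) with hYdef
  have hYcpt : IsCompact Y := isCompact_univ_pi (fun _ => hΓ₂cpt)
  set δ := q ^ m * (M * (M + 2)) with hδ
  have hδ0 : 0 ≤ δ := by positivity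
  have hsplit2 : ∀ u : S, T (m • s₁ + u) = A ^ m * T u := by
    intro u; rw [hTmul, hTpow]
  have hΦnear : ∀ u : S, ∃ g ∈ Y, dist (Φ u) g ≤ δ := by
    intro u
    refine ⟨fun j => Cm (T u (j : E)), ?_, ?_⟩
    · rw [Set.mem_univ_pi]
      intro j
      refine subset_closure ⟨T u (j : E), ?_, rfl⟩
      rw [Metric.mem_closedBall, dist_zero_right]
      exact hTuj u j
    · rw [dist_pi_le_iff hδ0]
      intro j
      rw [dist_eq_norm]
      have heq : Φ u j - Cm (T u (j:E)) = (R ^ m) (T u (j:E)) := by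
        show T (m • s₁ + u) (j:E) - Cm (T u (j:E)) = _
        rw [hsplit2 u, ContinuousLinearMap.mul_apply]
        have h5 : (A ^ m) (T u (j:E)) - Cm (T u (j:E)) = (A ^ m - Cm) (T u (j:E)) := by
          simp [ContinuousLinearMap.sub_apply]
        rw [h5, hCm, sub_sub_cancel]
      rw [heq]
      calc ‖(R ^ m) (T u (j:E))‖ ≤ ‖R ^ m‖ * ‖T u (j:E)‖ := (R ^ m).le_opNorm _
      _ ≤ q ^ m * (M * (M + 2)) :=
          mul_le_mul hRm (hTuj u j) (norm_nonneg _) (by positivity)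
  obtain ⟨Z, hZf, hZcov⟩ := totallyBounded_iff.mp hYcpt.totallyBounded (ε/16) (by positivity)
  have hΦcov : ∀ u : S, ∃ z ∈ Z, dist (Φ u) z < ε/16 + δ := by
    intro u
    obtain ⟨g, hgY, hgd⟩ := hΦnear u
    rcases Set.mem_iUnion₂.mp (hZcov hgY) with ⟨z, hzZ, hgz⟩
    refine ⟨z, hzZ, ?_⟩
    have h6 := Metric.mem_ball.mp hgz
    calc dist (Φ u) z ≤ dist (Φ u) g + dist g z := dist_triangle _ _ _
    _ < δ + ε/16 := by linarith
    _ = ε/16 + δ := add_comm _ _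
  have hsplit : ∀ u : S, T ((m + m) • s₁ + u) = T (m • s₁ + u) * A ^ m := by
    intro u
    have hs : (m + m) • s₁ + u = (m • s₁ + u) + m • s₁ := by
      rw [add_nsmul]; abel
    rw [hs, hTmul, hTpow]
  have hest : ∀ u u' : S,
      ‖T ((m + m) • s₁ + u) - T ((m + m) • s₁ + u')‖
        ≤ 2 * M * η + dist (Φ u) (Φ u') + 2 * M * q ^ m := by
    intro u u'
    set X := T (m • s₁ + u) - T (m • s₁ + u') with hX
    have hXnorm : ‖X‖ ≤ 2 * M := by
      calc ‖X‖ ≤ ‖T (m • s₁ + u)‖ + ‖T (m • s₁ + u')‖ := norm_sub_le _ _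
      _ ≤ M + M := add_le_add (hM _) (hM _)
      _ = 2 * M := by ring
    have hdiff : T ((m + m) • s₁ + u) - T ((m + m) • s₁ + u') = X * Cm + X * R ^ m := by
      rw [hsplit u, hsplit u', hX, hCm]; noncomm_ring
    rw [hdiff]
    have h2 : ‖X * R ^ m‖ ≤ 2 * M * q ^ m := by
      calc ‖X * R ^ m‖ ≤ ‖X‖ * ‖R ^ m‖ := norm_mul_le _ _
      _ ≤ 2 * M * q ^ m := mul_le_mul hXnorm hRm (norm_nonneg _) (by positivity)
    have h1 : ‖X * Cm‖ ≤ 2 * M * η + dist (Φ u) (Φ u') := by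
      have hd0 : (0:ℝ) ≤ dist (Φ u) (Φ u') := dist_nonneg
      apply Statement8.opnorm_le_unit
      · positivity
      intro x hx
      have hCx : Cm x ∈ Γ' := ⟨x, by rwa [Metric.mem_closedBall, dist_zero_right], rfl⟩
      rcases Set.mem_iUnion₂.mp (ht'cov hCx) with ⟨y, hyt', hby⟩
      have hXy : X (y:E) = Φ u ⟨y, hyt'⟩ - Φ u' ⟨y, hyt'⟩ := by
        simp [hΦ, hX, ContinuousLinearMap.sub_apply]
      have hd1 : ‖Cm x - y‖ ≤ η := by
        have h7 := Metric.mem_ball.mp hby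
        rw [← dist_eq_norm]
        exact h7.le
      calc ‖(X * Cm) x‖ = ‖X (Cm x - y) + X y‖ := by
            rw [ContinuousLinearMap.mul_apply]
            congr 1
            rw [map_sub]
            abel
      _ ≤ ‖X (Cm x - y)‖ + ‖X y‖ := norm_add_le _ _
      _ ≤ ‖X‖ * ‖Cm x - y‖ + dist (Φ u ⟨y, hyt'⟩) (Φ u' ⟨y, hyt'⟩) := by
            refine add_le_add (X.le_opNorm _) ?_
            rw [hXy, ← dist_eq_norm]
      _ ≤ 2 * M * η + dist (Φ u) (Φ u') := by
            refine add_le_add ?_ (dist_le_pi_dist _ _ _)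
            exact mul_le_mul hXnorm hd1 (norm_nonneg _) (by positivity)
    calc ‖X * Cm + X * R ^ m‖ ≤ ‖X * Cm‖ + ‖X * R ^ m‖ := norm_add_le _ _
    _ ≤ _ := by linarith
  set f : (↥t' → E) → (E →L[ℝ] E) := fun z =>
    if h : ∃ u : S, dist (Φ u) z < ε/16 + δ then T ((m + m) • s₁ + h.choose) else 0 with hf
  refine ⟨(m + m) • s₁, f '' Z, hZf.image f, ?_⟩
  rintro B ⟨s, hs, rfl⟩
  obtain ⟨p, rfl⟩ := hs
  obtain ⟨z, hzZ, hz⟩ := hΦcov p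
  have hex : ∃ u : S, dist (Φ u) z < ε/16 + δ := ⟨p, hz⟩
  refine Set.mem_iUnion₂.mpr ⟨f z, Set.mem_image_of_mem f hzZ, ?_⟩
  rw [Metric.mem_ball]
  have hfz : f z = T ((m + m) • s₁ + hex.choose) := dif_pos hex
  rw [hfz, dist_eq_norm]
  have h1 := hex.choose_spec
  have h2 : dist (Φ p) (Φ hex.choose) < 2 * (ε/16 + δ) := by
    calc dist (Φ p) (Φ hex.choose) ≤ dist (Φ p) z + dist z (Φ hex.choose) := dist_triangle _ _ _
    _ = dist (Φ p) z + dist (Φ hex.choose) z := by rw [dist_comm z]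
    _ < 2 * (ε/16 + δ) := by linarith
  have h3 := hest p hex.choose
  have h4 : 2 * M * η ≤ ε / 8 := by
    calc 2 * M * η ≤ 2 * M * (ε / (16 * M)) := mul_le_mul_of_nonneg_left hη2 (by positivity)
    _ = ε / 8 := by field_simp; ring
  have h5 : 2 * M * q ^ m ≤ 2 * δ := by
    rw [hδ]
    nlinarith [pow_nonneg hq0 m, hM0.le]
  linarith [hqm]

end Statement8Aux

/-- Let `(T_s)` be a bounded representation of a commutative monoid on a Banach
space such that `T_{s₀}` is quasi-compact for some `s₀ ∈ S`. Then the semigroup at infinity is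
non-empty and compact in the operator norm, and the projection at infinity has finite rank. -/
theorem statement8 {E : Type*} [NormedAddCommGroup E] [NormedSpace ℝ E] [CompleteSpace E]
    {S : Type*} [AddCommMonoid S] (T : S → E →L[ℝ] E)
    (hT0 : T 0 = 1) (hTmul : ∀ s t : S, T (s + t) = T s * T t)
    (hbdd : ∃ M : ℝ, ∀ s : S, ‖T s‖ ≤ M)
    (hqc : ∃ s₀ : S, QuasiCompact (T s₀)) :
    (sgAtInfty T).Nonempty ∧ IsCompact (sgAtInfty T) ∧
    ∀ P : E →L[ℝ] E, IsNeutralAtInfty T P →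
      FiniteDimensional ℝ (LinearMap.range (P : E →ₗ[ℝ] E)) := by
  classical
  obtain ⟨M₀, hM₀⟩ := hbdd
  set M := max M₀ 1 with hMdef
  have hM1 : (1:ℝ) ≤ M := le_max_right _ _
  have hM : ∀ s, ‖T s‖ ≤ M := fun s => (hM₀ s).trans (le_max_left _ _)
  have hM0 : (0:ℝ) < M := lt_of_lt_of_le one_pos hM1
  obtain ⟨s₀, K, n, hKcpt, hn, hqlt⟩ := hqc
  set s₁ := n • s₀ with hs₁
  have hq : ‖T s₁ - K‖ < 1 := by
    rw [hs₁, Statement8.sg_pow T hT0 hTmul s₀ n]; exact hqlt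
  have cover : ∀ ε > (0:ℝ), ∃ r : S, ∃ 𝒩 : Set (E →L[ℝ] E), 𝒩.Finite ∧
      T '' {s | sgLE r s} ⊆ ⋃ N ∈ 𝒩, Metric.ball N ε :=
    fun ε hε => Statement8.cover_lemma T hT0 hTmul hM1 hM hKcpt hq hε
  have htail_ne : ∀ r : S, (T '' {s | sgLE r s}).Nonempty :=
    fun r => ⟨T r, r, ⟨0, (add_zero r).symm⟩, rfl⟩
  have htail_mono : ∀ r p : S, T '' {s | sgLE (r + p) s} ⊆ T '' {s | sgLE r s} := by
    rintro r p B ⟨s, ⟨w, rfl⟩, rfl⟩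
    exact ⟨r + p + w, ⟨p + w, by rw [add_assoc]⟩, rfl⟩
  haveI : Nonempty S := ⟨0⟩
  have hdir : Directed (· ≥ ·) (fun r : S => (𝓟 (T '' {s | sgLE r s}) : Filter _)) := by
    intro r r'
    refine ⟨r + r', principal_mono.mpr (htail_mono r r'), principal_mono.mpr ?_⟩
    rw [add_comm r r']
    exact htail_mono r' r
  have hGne : (⨅ r : S, 𝓟 (T '' {s | sgLE r s})).NeBot :=
    iInf_neBot_of_directed' hdir (fun r => principal_neBot_iff.mpr (htail_ne r))
  set U := @Ultrafilter.of _ (⨅ r : S, 𝓟 (T '' {s | sgLE r s})) hGne with hUdef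
  have hUle : (U : Filter (E →L[ℝ] E)) ≤ ⨅ r : S, 𝓟 (T '' {s | sgLE r s}) :=
    Ultrafilter.of_le _
  have hUtail : ∀ r : S, T '' {s | sgLE r s} ∈ U := by
    intro r
    exact le_principal_iff.mp (hUle.trans (iInf_le _ r))
  have hUcauchy : Cauchy (U : Filter (E →L[ℝ] E)) := by
    rw [Metric.cauchy_iff]
    refine ⟨U.neBot, ?_⟩
    intro ε hε
    obtain ⟨r, 𝒩, h𝒩f, hcov⟩ := cover (ε/3) (by positivity)
    have hU3 : (⋃ N ∈ 𝒩, Metric.ball N (ε/3)) ∈ U := mem_of_superset (hUtail r) hcov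
    obtain ⟨N, hN𝒩, hNU⟩ := (Ultrafilter.finite_biUnion_mem_iff h𝒩f).mp hU3
    refine ⟨Metric.ball N (ε/3), hNU, ?_⟩
    intro x hx y hy
    have h1 := Metric.mem_ball.mp hx
    have h2 : dist N y < ε/3 := by rw [dist_comm]; exact Metric.mem_ball.mp hy
    calc dist x y ≤ dist x N + dist N y := dist_triangle _ _ _
    _ < ε := by linarith
  obtain ⟨A₀, hA₀⟩ := CompleteSpace.complete hUcauchy
  have hA₀mem : A₀ ∈ sgAtInfty T := by
    refine Set.mem_iInter.mpr fun r => ?_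
    rw [mem_closure_iff_nhds]
    intro V hV
    have hV' : V ∈ (U : Filter (E →L[ℝ] E)) := hA₀ hV
    exact Ultrafilter.nonempty_of_mem (Filter.inter_mem hV' (hUtail r))
  have hne : (sgAtInfty T).Nonempty := ⟨A₀, hA₀mem⟩
  have hclosed : IsClosed (sgAtInfty T) := isClosed_iInter fun r => isClosed_closure
  have htb : TotallyBounded (sgAtInfty T) := by
    rw [Metric.totallyBounded_iff]
    intro ε hε
    obtain ⟨r, 𝒩, h𝒩f, hcov⟩ := cover (ε/2) (by positivity)
    refine ⟨𝒩, h𝒩f, ?_⟩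
    have hsub : sgAtInfty T ⊆ closure (T '' {s | sgLE r s}) := Set.iInter_subset _ r
    have hsub2 : closure (T '' {s | sgLE r s}) ⊆ ⋃ N ∈ 𝒩, Metric.closedBall N (ε/2) := by
      apply closure_minimal
      · exact hcov.trans (Set.iUnion₂_mono fun N _ => Metric.ball_subset_closedBall)
      · exact h𝒩f.isClosed_biUnion fun N _ => Metric.isClosed_closedBall
    intro x hx
    rcases Set.mem_iUnion₂.mp (hsub2 (hsub hx)) with ⟨N, hN, hxN⟩
    refine Set.mem_iUnion₂.mpr ⟨N, hN, Metric.mem_ball.mpr ?_⟩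
    have := Metric.mem_closedBall.mp hxN
    linarith
  have hcpt : IsCompact (sgAtInfty T) := TotallyBounded.isCompact_of_isClosed htb hclosed
  refine ⟨hne, hcpt, ?_⟩
  intro P hP
  have hPmem := hP.1
  have hPP : P * P = P := (hP.2 P hP.1).1
  have hq0 : (0:ℝ) ≤ ‖T s₁ - K‖ := norm_nonneg _
  have htend : Tendsto (fun k : ℕ => ‖T s₁ - K‖ ^ k) atTop (𝓝 0) :=
    tendsto_pow_atTop_nhds_zero_of_lt_one hq0 hq
  have hPtb : TotallyBounded (⇑P '' Metric.closedBall 0 1) := by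
    rw [Metric.totallyBounded_iff]
    intro ρ hρ
    obtain ⟨m, hm⟩ := (htend.eventually_lt_const (show (0:ℝ) < ρ/4/M by positivity)).exists
    have hqmM : ‖T s₁ - K‖ ^ m * M < ρ/4 := by
      rw [← lt_div_iff₀ hM0]; exact hm
    have hPcl : P ∈ closure (T '' {s | sgLE (m • s₁) s}) := Set.mem_iInter.mp hPmem (m • s₁)
    obtain ⟨B, hBmem, hBd⟩ := Metric.mem_closure_iff.mp hPcl (ρ/4) (by positivity)
    obtain ⟨s, ⟨u, rfl⟩, rfl⟩ := hBmem
    set Cm := T s₁ ^ m - (T s₁ - K) ^ m with hCm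
    have hCmcpt : IsCompactOperator ⇑Cm := Statement8.cm_compact (T s₁) K hKcpt m
    have hCmcpt' : IsCompactOperator ⇑((Cm : E →ₗ[ℝ] E)) := by simpa using hCmcpt
    have htb2 : TotallyBounded (Cm '' Metric.closedBall 0 M) := by
      have h := (hCmcpt'.isCompact_closure_image_closedBall (𝕜₁ := ℝ) M).totallyBounded
      exact TotallyBounded.subset subset_closure h
    obtain ⟨t, htf, htcov⟩ := Metric.totallyBounded_iff.mp htb2 (ρ/4) (by positivity)
    refine ⟨t, htf, ?_⟩
    rintro x ⟨z, hz, rfl⟩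
    have hz1 : ‖z‖ ≤ 1 := by simpa [Metric.mem_closedBall, dist_eq_norm] using hz
    have hsplit : T (m • s₁ + u) z = Cm (T u z) + ((T s₁ - K) ^ m) (T u z) := by
      rw [hTmul, Statement8.sg_pow T hT0 hTmul s₁ m, ContinuousLinearMap.mul_apply]
      have h8 : T s₁ ^ m = Cm + (T s₁ - K) ^ m := by rw [hCm, sub_add_cancel]
      rw [h8, ContinuousLinearMap.add_apply]
    have hTuz : ‖T u z‖ ≤ M := by
      calc ‖T u z‖ ≤ ‖T u‖ * ‖z‖ := (T u).le_opNorm _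
      _ ≤ M * 1 := mul_le_mul (hM u) hz1 (norm_nonneg _) hM0.le
      _ = M := mul_one _
    have hmem2 : Cm (T u z) ∈ Cm '' Metric.closedBall 0 M :=
      ⟨T u z, by rw [Metric.mem_closedBall, dist_zero_right]; exact hTuz, rfl⟩
    rcases Set.mem_iUnion₂.mp (htcov hmem2) with ⟨y, hyt, hy⟩
    refine Set.mem_iUnion₂.mpr ⟨y, hyt, Metric.mem_ball.mpr ?_⟩
    have e0 : P z - y = (P - T (m • s₁ + u)) z + ((T s₁ - K) ^ m) (T u z)
        + (Cm (T u z) - y) := by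
      rw [ContinuousLinearMap.sub_apply, hsplit]; abel
    rw [dist_eq_norm, e0]
    have b1 : ‖(P - T (m • s₁ + u)) z‖ ≤ ρ/4 := by
      calc ‖(P - T (m • s₁ + u)) z‖ ≤ ‖P - T (m • s₁ + u)‖ * ‖z‖ :=
            (P - T (m • s₁ + u)).le_opNorm _
      _ ≤ (ρ/4) * 1 := by
            apply mul_le_mul ?_ hz1 (norm_nonneg _) (by positivity)
            rw [← dist_eq_norm]
            exact hBd.le
      _ = ρ/4 := mul_one _
    have b2 : ‖((T s₁ - K) ^ m) (T u z)‖ ≤ ‖T s₁ - K‖ ^ m * M := by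
      calc ‖((T s₁ - K) ^ m) (T u z)‖ ≤ ‖(T s₁ - K) ^ m‖ * ‖T u z‖ :=
            ((T s₁ - K) ^ m).le_opNorm _
      _ ≤ ‖T s₁ - K‖ ^ m * M :=
            mul_le_mul (Statement8.norm_pow_le _ m) hTuz (norm_nonneg _)
              (pow_nonneg hq0 m)
    have b3 : ‖Cm (T u z) - y‖ < ρ/4 := by
      rw [← dist_eq_norm]; exact Metric.mem_ball.mp hy
    calc ‖(P - T (m • s₁ + u)) z + ((T s₁ - K) ^ m) (T u z) + (Cm (T u z) - y)‖
        ≤ ‖(P - T (m • s₁ + u)) z + ((T s₁ - K) ^ m) (T u z)‖ + ‖Cm (T u z) - y‖ :=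
          norm_add_le _ _
    _ ≤ ‖(P - T (m • s₁ + u)) z‖ + ‖((T s₁ - K) ^ m) (T u z)‖ + ‖Cm (T u z) - y‖ := by
          have := norm_add_le ((P - T (m • s₁ + u)) z) (((T s₁ - K) ^ m) (T u z))
          linarith
    _ < ρ := by linarith
  have hProj : ∀ x : E, x ∈ LinearMap.range (P : E →ₗ[ℝ] E) → P x = x := by
    rintro x ⟨z, rfl⟩
    have h9 := congrArg (fun Q : E →L[ℝ] E => Q z) hPP
    simpa using h9
  have hFclosed : IsClosed ((LinearMap.range (P : E →ₗ[ℝ] E) : Submodule ℝ E) : Set E) := by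
    have hset : ((LinearMap.range (P : E →ₗ[ℝ] E) : Submodule ℝ E) : Set E) = ⇑(1 - P) ⁻¹' {0} := by
      ext x
      simp only [Set.mem_preimage, Set.mem_singleton_iff, SetLike.mem_coe,
        ContinuousLinearMap.sub_apply, ContinuousLinearMap.one_apply]
      constructor
      · intro hx; rw [hProj x hx, sub_self]
      · intro hx
        exact ⟨x, (sub_eq_zero.mp hx).symm⟩
    rw [hset]
    exact IsClosed.preimage (1 - P).continuous isClosed_singleton
  have hSb : IsCompact {x : E | x ∈ LinearMap.range (P : E →ₗ[ℝ] E) ∧ ‖x‖ ≤ 1} := by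
    apply TotallyBounded.isCompact_of_isClosed
    · apply TotallyBounded.subset ?_ hPtb
      rintro x ⟨hx, hx1⟩
      exact ⟨x, by rw [Metric.mem_closedBall, dist_zero_right]; exact hx1, hProj x hx⟩
    · have : {x : E | x ∈ LinearMap.range (P : E →ₗ[ℝ] E) ∧ ‖x‖ ≤ 1}
          = ((LinearMap.range (P : E →ₗ[ℝ] E) : Submodule ℝ E) : Set E) ∩ Metric.closedBall 0 1 := by
        ext x
        simp [Metric.mem_closedBall, dist_zero_right]
      rw [this]
      exact hFclosed.inter Metric.isClosed_closedBall
  have hball : IsCompact (Metric.closedBall (0 : ↥(LinearMap.range (P : E →ₗ[ℝ] E))) 1) := by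
    rw [Topology.IsEmbedding.subtypeVal.isCompact_iff]
    have himg : (Subtype.val '' Metric.closedBall (0 : ↥(LinearMap.range (P : E →ₗ[ℝ] E))) 1)
        = {x : E | x ∈ LinearMap.range (P : E →ₗ[ℝ] E) ∧ ‖x‖ ≤ 1} := by
      ext x
      constructor
      · rintro ⟨⟨x, hx⟩, hb, rfl⟩
        refine ⟨hx, ?_⟩
        have := Metric.mem_closedBall.mp hb
        rw [dist_zero_right] at this
        simpa using this
      · rintro ⟨hx, hx1⟩
        refine ⟨⟨x, hx⟩, ?_, rfl⟩
        rw [Metric.mem_closedBall, dist_zero_right]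
        simpa using hx1
    rw [himg]
    exact hSb
  exact FiniteDimensional.of_isCompact_closedBall₀ ℝ one_pos hball
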